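/- arXiv:2602.19600 — 4 statements merged into one kernel-verified Lean document; each statement's English description precedes it below -/
import Mathlib

section
/- Variance–mean bound for the excess loss: Under the assumptions ‖h*‖_∞ ≤ B and ‖h‖_∞ ≤ B, with ρ²(h*,h) := E[ℓ(·;h) − ℓ(·;h*)] the excess risk, one has Var(ℓ(·;h) − ℓ(·;h*)) ≤ (40 α_t² B²/σ_t⁴) · ρ²(h*,h). -/
open MeasureTheory ProbabilityTheory Real

/-- The standard Gaussian `N(0, I_D)` on `ℝ^D`. -/
noncomputable def stdGaussian (D : ℕ) : Measure (EuclideanSpace ℝ (Fin D)) :=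
  (Measure.pi fun _ : Fin D => gaussianReal 0 1).map
    (EuclideanSpace.equiv (Fin D) ℝ).symm

open scoped RealInnerProductSpace
set_option maxHeartbeats 1000000

lemma condexp_inner_aux {Ω : Type*} {m : MeasurableSpace Ω} {m0 : MeasurableSpace Ω}
    {μ : Measure Ω} [IsProbabilityMeasure μ] (hm : m ≤ m0) {D : ℕ}
    {f : Ω → EuclideanSpace ℝ (Fin D)} (hf : Integrable f μ)
    (v : EuclideanSpace ℝ (Fin D)) :
    (fun ω => ⟪(μ[f|m]) ω, v⟫) =ᵐ[μ] μ[fun ω => ⟪f ω, v⟫ | m] := by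
  haveI : SigmaFinite (μ.trim hm) := by
    have : IsFiniteMeasure (μ.trim hm) := isFiniteMeasure_trim hm
    infer_instance
  refine ae_eq_condExp_of_forall_setIntegral_eq hm (hf.inner_const v)
    (fun s _ _ => (integrable_condExp.inner_const v).integrableOn)
    (fun s hs hμs => ?_) ?_
  · have h1 : ∫ x in s, ⟪(μ[f|m]) x, v⟫ ∂μ = ⟪v, ∫ x in s, (μ[f|m]) x ∂μ⟫ := by
      rw [← integral_inner integrable_condExp.integrableOn v]
      simp_rw [real_inner_comm]
    have h2 : ∫ x in s, ⟪f x, v⟫ ∂μ = ⟪v, ∫ x in s, f x ∂μ⟫ := by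
      rw [← integral_inner hf.integrableOn v]
      simp_rw [real_inner_comm]
    rw [h1, h2, setIntegral_condExp hm hf hs]
  · exact StronglyMeasurable.aestronglyMeasurable
      (stronglyMeasurable_condExp.inner stronglyMeasurable_const)

lemma ae_norm_condexp_le {Ω : Type*} {m : MeasurableSpace Ω} {m0 : MeasurableSpace Ω}
    {μ : Measure Ω} [IsProbabilityMeasure μ] (hm : m ≤ m0) {D : ℕ} {B : ℝ} (hB : 0 ≤ B)
    {f : Ω → EuclideanSpace ℝ (Fin D)} (hf : Integrable f μ)
    (hfB : ∀ᵐ ω ∂μ, ‖f ω‖ ≤ B) :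
    ∀ᵐ ω ∂μ, ‖(μ[f|m]) ω‖ ≤ B := by
  obtain ⟨T, hTc, hTd⟩ := TopologicalSpace.exists_countable_dense (EuclideanSpace ℝ (Fin D))
  have key : ∀ᵐ ω ∂μ, ∀ v ∈ T, |⟪(μ[f|m]) ω, v⟫| ≤ B * ‖v‖ := by
    rw [ae_ball_iff hTc]
    intro v _
    have hbdd : ∀ᵐ ω ∂μ, |⟪f ω, v⟫| ≤ ((⟨B * ‖v‖, by positivity⟩ : NNReal) : ℝ) := by
      filter_upwards [hfB] with ω hω
      exact (abs_real_inner_le_norm _ _).trans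
        (mul_le_mul_of_nonneg_right hω (norm_nonneg _))
    filter_upwards [ae_bdd_condExp_of_ae_bdd hbdd, condexp_inner_aux hm hf v] with ω h1 h2
    rw [h2]; exact h1
  filter_upwards [key] with ω hω
  have hall : ∀ v : EuclideanSpace ℝ (Fin D), ⟪(μ[f|m]) ω, v⟫ ≤ B * ‖v‖ := by
    intro v
    have hcl : IsClosed {v : EuclideanSpace ℝ (Fin D) | ⟪(μ[f|m]) ω, v⟫ ≤ B * ‖v‖} :=
      isClosed_le (Continuous.inner continuous_const continuous_id)
        (continuous_const.mul continuous_norm)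
    have hsub : T ⊆ {v | ⟪(μ[f|m]) ω, v⟫ ≤ B * ‖v‖} := fun v hv =>
      (le_abs_self _).trans (hω v hv)
    have := hcl.closure_subset_iff.mpr hsub
    rw [hTd.closure_eq] at this
    exact this (Set.mem_univ v)
  have := hall ((μ[f|m]) ω)
  rw [real_inner_self_eq_norm_sq] at this
  nlinarith [norm_nonneg ((μ[f|m]) ω)]

/-- Variance–mean bound for the excess loss: with `‖h*‖_∞ ≤ B`, `‖h‖_∞ ≤ B`, reduced
losses `ℓ(·;h) = (α_t²/σ_t⁴)‖m_h(Y_t) − Y₀‖²`, and excess risk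
`ρ²(h*,h) = (α_t²/σ_t⁴) E‖m_h(Y_t) − m₀(Y_t)‖²`, one has
`Var(ℓ(·;h) − ℓ(·;h*)) ≤ (40 α_t² B²/σ_t⁴) ρ²(h*,h)`. -/
theorem variance_mean_bound {d D : ℕ} {Ω : Type*} [MeasurableSpace Ω]
    (μ : Measure Ω) [IsProbabilityMeasure μ]
    (αt σt B : ℝ) (hα : 0 < αt) (hσ : 0 < σt) (hB : 0 ≤ B)
    (U : Ω → EuclideanSpace ℝ (Fin d)) (hU : Measurable U)
    (Z : Ω → EuclideanSpace ℝ (Fin D)) (hZ : Measurable Z)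
    (hZlaw : μ.map Z = stdGaussian D)
    (hstar h : EuclideanSpace ℝ (Fin d) → EuclideanSpace ℝ (Fin D))
    (hhstarB : ∀ u, ‖hstar u‖ ≤ B) (hhB : ∀ u, ‖h u‖ ≤ B)
    (hmeas : Measurable h) (hstarmeas : Measurable hstar)
    (hindep : IndepFun U Z μ)
    (Y0 Yt : Ω → EuclideanSpace ℝ (Fin D))
    (hY0 : ∀ ω, Y0 ω = hstar (U ω))
    (hYt : ∀ ω, Yt ω = αt • Y0 ω + σt • Z ω)
    (mh m0 : EuclideanSpace ℝ (Fin D) → EuclideanSpace ℝ (Fin D))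
    (hmh : μ[(fun ω => h (U ω)) | MeasurableSpace.comap Yt inferInstance]
      =ᵐ[μ] fun ω => mh (Yt ω))
    (hm0 : μ[Y0 | MeasurableSpace.comap Yt inferInstance]
      =ᵐ[μ] fun ω => m0 (Yt ω)) :
    variance (fun ω =>
        (αt ^ 2 / σt ^ 4) * ‖mh (Yt ω) - Y0 ω‖ ^ 2
          - (αt ^ 2 / σt ^ 4) * ‖m0 (Yt ω) - Y0 ω‖ ^ 2) μ
      ≤ (40 * αt ^ 2 * B ^ 2 / σt ^ 4) *
          ((αt ^ 2 / σt ^ 4) * ∫ ω, ‖mh (Yt ω) - m0 (Yt ω)‖ ^ 2 ∂μ) := by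
  set c : ℝ := αt ^ 2 / σt ^ 4 with hc
  have hc0 : 0 ≤ c := by positivity
  have hY0meas : Measurable Y0 := by
    have : Y0 = fun ω => hstar (U ω) := funext hY0
    rw [this]; exact hstarmeas.comp hU
  have hYtmeas : Measurable Yt := by
    have : Yt = fun ω => αt • Y0 ω + σt • Z ω := funext hYt
    rw [this]
    exact (hY0meas.const_smul αt).add (hZ.const_smul σt)
  have hm : MeasurableSpace.comap Yt inferInstance ≤ ‹MeasurableSpace Ω› :=
    hYtmeas.comap_le
  have hY0B : ∀ ω, ‖Y0 ω‖ ≤ B := fun ω => by rw [hY0]; exact hhstarB _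
  have hY0int : Integrable Y0 μ :=
    Integrable.mono' (integrable_const B) hY0meas.aestronglyMeasurable
      (Filter.Eventually.of_forall hY0B)
  have hHUint : Integrable (fun ω => h (U ω)) μ :=
    Integrable.mono' (integrable_const B) (hmeas.comp hU).aestronglyMeasurable
      (Filter.Eventually.of_forall fun ω => hhB _)
  -- a.e. bounds on the conditional means
  have hMH : ∀ᵐ ω ∂μ, ‖mh (Yt ω)‖ ≤ B := by
    filter_upwards [hmh,
      ae_norm_condexp_le hm hB hHUint (Filter.Eventually.of_forall fun ω => hhB _)]
      with ω h1 h2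
    rw [← h1]; exact h2
  have hM0 : ∀ᵐ ω ∂μ, ‖m0 (Yt ω)‖ ≤ B := by
    filter_upwards [hm0,
      ae_norm_condexp_le hm hB hY0int (Filter.Eventually.of_forall hY0B)]
      with ω h1 h2
    rw [← h1]; exact h2
  -- a.e. strong measurability
  have asmMH : AEStronglyMeasurable (fun ω => mh (Yt ω)) μ :=
    ((stronglyMeasurable_condExp.mono hm).aestronglyMeasurable).congr hmh
  have asmM0 : AEStronglyMeasurable (fun ω => m0 (Yt ω)) μ :=
    ((stronglyMeasurable_condExp.mono hm).aestronglyMeasurable).congr hm0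
  set X : Ω → ℝ := fun ω =>
    c * ‖mh (Yt ω) - Y0 ω‖ ^ 2 - c * ‖m0 (Yt ω) - Y0 ω‖ ^ 2 with hX
  have asmF : AEStronglyMeasurable (fun ω => ‖mh (Yt ω) - m0 (Yt ω)‖ ^ 2) μ := by
    have := (asmMH.sub asmM0).norm
    exact (this.mul this).congr (Filter.Eventually.of_forall fun ω => (sq ‖_‖).symm)
  have asmX : AEStronglyMeasurable X μ := by
    have h1 : AEStronglyMeasurable (fun ω => ‖mh (Yt ω) - Y0 ω‖ ^ 2) μ := by
      have := (asmMH.sub hY0meas.aestronglyMeasurable).norm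
      exact (this.mul this).congr (Filter.Eventually.of_forall fun ω => (sq ‖_‖).symm)
    have h2 : AEStronglyMeasurable (fun ω => ‖m0 (Yt ω) - Y0 ω‖ ^ 2) μ := by
      have := (asmM0.sub hY0meas.aestronglyMeasurable).norm
      exact (this.mul this).congr (Filter.Eventually.of_forall fun ω => (sq ‖_‖).symm)
    exact (h1.const_mul c).sub (h2.const_mul c)
  -- pointwise (a.e.) bound : X^2 ≤ 40 c^2 B^2 ‖mh - m0‖^2
  have hptwise : ∀ᵐ ω ∂μ, X ω ^ 2 ≤
      (40 * c ^ 2 * B ^ 2) * ‖mh (Yt ω) - m0 (Yt ω)‖ ^ 2 := by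
    filter_upwards [hMH, hM0] with ω h1 h2
    set a := mh (Yt ω); set b := m0 (Yt ω); set y := Y0 ω
    have hy : ‖y‖ ≤ B := hY0B ω
    have hab : ‖a - b‖ ≤ 2 * B := by
      calc ‖a - b‖ ≤ ‖a‖ + ‖b‖ := norm_sub_le _ _
        _ ≤ 2 * B := by linarith
    have hby : ‖b - y‖ ≤ 2 * B := by
      calc ‖b - y‖ ≤ ‖b‖ + ‖y‖ := norm_sub_le _ _
        _ ≤ 2 * B := by linarith
    have hdecomp : ‖a - y‖ ^ 2 = ‖a - b‖ ^ 2 + 2 * ⟪a - b, b - y⟫ + ‖b - y‖ ^ 2 := by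
      have : a - y = (a - b) + (b - y) := by abel
      rw [this, @norm_add_sq_real]
    have hinner : |⟪a - b, b - y⟫| ≤ ‖a - b‖ * ‖b - y‖ := abs_real_inner_le_norm _ _
    have hXω : X ω = c * (‖a - b‖ ^ 2 + 2 * ⟪a - b, b - y⟫) := by
      simp only [hX]
      rw [hdecomp]; ring
    rw [hXω]
    have h3 := abs_le.mp hinner
    set na := ‖a - b‖ with hna
    set nb := ‖b - y‖ with hnb
    set t : ℝ := ⟪a - b, b - y⟫ with ht
    have hna0 : 0 ≤ na := norm_nonneg _
    have hnb0 : 0 ≤ nb := norm_nonneg _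
    have hna2 : na ^ 2 ≤ 4 * B ^ 2 := by nlinarith
    have hnb2 : nb ^ 2 ≤ 4 * B ^ 2 := by nlinarith
    have hnanb : na * nb ≤ 4 * B ^ 2 := by nlinarith
    have ht2 : t ^ 2 ≤ na ^ 2 * nb ^ 2 := by
      have := sq_le_sq' h3.1 h3.2
      calc t ^ 2 ≤ (na * nb) ^ 2 := this
        _ = na ^ 2 * nb ^ 2 := by ring
    have p1 : 0 ≤ na ^ 2 * (na * nb - t) :=
      mul_nonneg (sq_nonneg na) (by linarith [h3.2])
    have p1' : 0 ≤ na ^ 2 * (na * nb + t) :=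
      mul_nonneg (sq_nonneg na) (by linarith [h3.1])
    have p2 : 0 ≤ na ^ 2 * (4 * B ^ 2 - na * nb) :=
      mul_nonneg (sq_nonneg na) (by linarith)
    have p3 : 0 ≤ na ^ 2 * (4 * B ^ 2 - na ^ 2) :=
      mul_nonneg (sq_nonneg na) (by linarith)
    have p4 : 0 ≤ na ^ 2 * (4 * B ^ 2 - nb ^ 2) :=
      mul_nonneg (sq_nonneg na) (by linarith)
    have p5 : 0 ≤ B ^ 2 * na ^ 2 := mul_nonneg (sq_nonneg B) (sq_nonneg na)
    have key : (na ^ 2 + 2 * t) ^ 2 ≤ 40 * B ^ 2 * na ^ 2 := by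
      nlinarith [p1, p1', p2, p3, p4, p5, ht2]
    calc (c * (na ^ 2 + 2 * t)) ^ 2 = c ^ 2 * (na ^ 2 + 2 * t) ^ 2 := by ring
      _ ≤ c ^ 2 * (40 * B ^ 2 * na ^ 2) := by
          exact mul_le_mul_of_nonneg_left key (sq_nonneg c)
      _ = 40 * c ^ 2 * B ^ 2 * na ^ 2 := by ring
  -- integrability
  have hFbd : ∀ᵐ ω ∂μ, ‖mh (Yt ω) - m0 (Yt ω)‖ ^ 2 ≤ 4 * B ^ 2 := by
    filter_upwards [hMH, hM0] with ω h1 h2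
    have : ‖mh (Yt ω) - m0 (Yt ω)‖ ≤ 2 * B :=
      (norm_sub_le _ _).trans (by linarith)
    nlinarith [norm_nonneg (mh (Yt ω) - m0 (Yt ω))]
  have hFint : Integrable (fun ω => ‖mh (Yt ω) - m0 (Yt ω)‖ ^ 2) μ :=
    Integrable.mono' (integrable_const (4 * B ^ 2)) asmF
      (by filter_upwards [hFbd] with ω hω; rwa [Real.norm_of_nonneg (by positivity)])
  have hX2int : Integrable (fun ω => X ω ^ 2) μ := by
    refine Integrable.mono' ((hFint.const_mul (40 * c ^ 2 * B ^ 2))) ?_ ?_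
    · exact (asmX.mul asmX).congr (Filter.Eventually.of_forall fun ω => (sq (X ω)).symm)
    · filter_upwards [hptwise] with ω hω
      rwa [Real.norm_of_nonneg (sq_nonneg _)]
  -- put everything together
  have hvar : variance X μ ≤ ∫ ω, X ω ^ 2 ∂μ := by
    have := variance_le_expectation_sq (X := X) asmX
    simpa using this
  have hint : ∫ ω, X ω ^ 2 ∂μ ≤
      ∫ ω, (40 * c ^ 2 * B ^ 2) * ‖mh (Yt ω) - m0 (Yt ω)‖ ^ 2 ∂μ :=
    integral_mono_ae hX2int (hFint.const_mul _) hptwise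
  have hfinal : ∫ ω, (40 * c ^ 2 * B ^ 2) * ‖mh (Yt ω) - m0 (Yt ω)‖ ^ 2 ∂μ
      = (40 * αt ^ 2 * B ^ 2 / σt ^ 4) *
          (c * ∫ ω, ‖mh (Yt ω) - m0 (Yt ω)‖ ^ 2 ∂μ) := by
    rw [integral_const_mul, hc]; ring
  calc variance X μ ≤ ∫ ω, X ω ^ 2 ∂μ := hvar
    _ ≤ _ := hint
    _ = _ := hfinal
end

section
/- Lipschitz transfer for the softmax-weighted score map: Fix σ > 0. For x ∈ ℝ^D with ‖x‖ ≤ R_x and center tuples y = (y_1,…,y_K), y' = (y'_1,…,y'_K) with all ‖y_i‖, ‖y'_i‖ ≤ R_y, define g_y(x) = x/σ² − (1/σ²) Σ_i w_i(x; y) y_i where w(x; y) = softmax(s(x;y)) with s_i(x;y) = −‖x−y_i‖²/(2σ²). Then ‖g_y(x) − g_{y'}(x)‖ ≤ (C₀/σ²) max_i ‖y_i − y'_i‖ with C₀ = 1 + 2 R_y (R_x + R_y)/σ². -/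
open Real

/-- The softmax map on `ℝ^K`. -/
noncomputable def softmax {K : ℕ} (s : Fin K → ℝ) (i : Fin K) : ℝ :=
  Real.exp (s i) / ∑ j, Real.exp (s j)

/-- Gaussian logits of `x` against centers `y`. -/
noncomputable def gaussLogits {D K : ℕ} (σ : ℝ) (x : EuclideanSpace ℝ (Fin D))
    (y : Fin K → EuclideanSpace ℝ (Fin D)) (i : Fin K) : ℝ :=
  -‖x - y i‖ ^ 2 / (2 * σ ^ 2)

/-- The softmax-weighted score map `g_y(x) = x/σ² − (1/σ²) Σ_i w_i(x;y) y_i`. -/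
noncomputable def scoreMap {D K : ℕ} (σ : ℝ) (x : EuclideanSpace ℝ (Fin D))
    (y : Fin K → EuclideanSpace ℝ (Fin D)) : EuclideanSpace ℝ (Fin D) :=
  (σ ^ 2)⁻¹ • x - (σ ^ 2)⁻¹ • ∑ i, softmax (gaussLogits σ x y) i • y i

theorem key_exp_ineq (δ : ℝ) (hδ : 0 ≤ δ) :
    1 - Real.exp (-2*δ) ≤ δ * (1 + Real.exp (-2*δ)) := by
  have h : ∀ t : ℝ, HasDerivAt (fun t : ℝ => t * (1 + Real.exp (-2*t)) - (1 - Real.exp (-2*t)))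
      (1 - Real.exp (-2*t) - 2*t*Real.exp (-2*t)) t := by
    intro t
    have he : HasDerivAt (fun t : ℝ => Real.exp (-2*t)) (-2 * Real.exp (-2*t)) t := by
      have := HasDerivAt.exp ((hasDerivAt_id t).const_mul (-2))
      simpa [mul_comm] using this
    have h1 : HasDerivAt (fun t : ℝ => t * (1 + Real.exp (-2*t)))
        (1 * (1 + Real.exp (-2*t)) + t * (0 + -2 * Real.exp (-2*t))) t :=
      (hasDerivAt_id t).mul ((hasDerivAt_const t 1).add he)
    have h2 := h1.sub ((hasDerivAt_const t 1).sub he)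
    refine h2.congr_deriv ?_
    ring
  have mono : MonotoneOn (fun t : ℝ => t * (1 + Real.exp (-2*t)) - (1 - Real.exp (-2*t)))
      (Set.Ici 0) := by
    apply monotoneOn_of_deriv_nonneg (convex_Ici 0)
    · exact Continuous.continuousOn (by continuity)
    · intro t ht
      exact (h t).differentiableAt.differentiableWithinAt
    · intro t ht
      rw [(h t).deriv]
      have ht' : 0 < t := by simpa using ht
      have hle : 1 + 2*t ≤ Real.exp (2*t) := by
        have := Real.add_one_le_exp (2*t); linarith
      have hexp : Real.exp (-2*t) * (1 + 2*t) ≤ 1 := by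
        rw [show (-2*t : ℝ) = -(2*t) by ring, Real.exp_neg,
          inv_mul_le_iff₀ (Real.exp_pos _)]
        nlinarith
      nlinarith [Real.exp_pos (-2*t)]
  have h0 := mono (Set.self_mem_Ici) (Set.mem_Ici.2 hδ) hδ
  simp [neg_mul] at h0 ⊢
  linarith

theorem softmax_sum_pos {K : ℕ} (hK : 0 < K) (s : Fin K → ℝ) : 0 < ∑ j, Real.exp (s j) :=
  Finset.sum_pos (fun j _ => Real.exp_pos _)
    (by simp [Finset.univ_nonempty_iff, Fin.pos_iff_nonempty.mp hK])

theorem softmax_sum_eq_one {K : ℕ} (hK : 0 < K) (s : Fin K → ℝ) : ∑ i, softmax s i = 1 := by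
  unfold softmax
  rw [← Finset.sum_div, div_self (softmax_sum_pos hK s).ne']

theorem softmax_nonneg {K : ℕ} (hK : 0 < K) (s : Fin K → ℝ) (i : Fin K) : 0 ≤ softmax s i :=
  div_nonneg (Real.exp_pos _).le (softmax_sum_pos hK s).le

theorem softmax_pointwise {K : ℕ} (hK : 0 < K) (s s' : Fin K → ℝ) (δ : ℝ)
    (hδ : ∀ i, |s i - s' i| ≤ δ) (i : Fin K) :
    softmax s i - softmax s' i ≤ (1 - Real.exp (-2*δ)) * softmax s i := by
  have hA := softmax_sum_pos hK s
  have hB := softmax_sum_pos hK s'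
  have h1 : Real.exp (s i) * Real.exp (-δ) ≤ Real.exp (s' i) := by
    rw [← Real.exp_add]
    exact Real.exp_le_exp.2 (by have := (abs_le.1 (hδ i)).2; linarith)
  have h2 : ∑ j, Real.exp (s' j) ≤ Real.exp δ * ∑ j, Real.exp (s j) := by
    rw [Finset.mul_sum]
    refine Finset.sum_le_sum fun j _ => ?_
    rw [← Real.exp_add]
    exact Real.exp_le_exp.2 (by have := (abs_le.1 (hδ j)).1; linarith)
  have key : Real.exp (-2*δ) * softmax s i ≤ softmax s' i := by
    unfold softmax
    rw [mul_div_assoc', div_le_div_iff₀ hA hB]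
    have e1 : Real.exp (-2*δ) * Real.exp δ = Real.exp (-δ) := by
      rw [← Real.exp_add]; ring_nf
    calc Real.exp (-2*δ) * Real.exp (s i) * ∑ j, Real.exp (s' j)
        ≤ Real.exp (-2*δ) * Real.exp (s i) * (Real.exp δ * ∑ j, Real.exp (s j)) := by
          have : (0:ℝ) ≤ Real.exp (-2*δ) * Real.exp (s i) := by positivity
          exact mul_le_mul_of_nonneg_left h2 this
      _ = Real.exp (s i) * Real.exp (-δ) * ∑ j, Real.exp (s j) := by
          rw [← e1]; ring
      _ ≤ Real.exp (s' i) * ∑ j, Real.exp (s j) := mul_le_mul_of_nonneg_right h1 hA.le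
  nlinarith [softmax_nonneg hK s i]

theorem softmax_l1 {K : ℕ} (hK : 0 < K) (s s' : Fin K → ℝ) (δ : ℝ) (hδ0 : 0 ≤ δ)
    (hδ : ∀ i, |s i - s' i| ≤ δ) :
    ∑ i, |softmax s i - softmax s' i| ≤ 2 * δ := by
  set u := Real.exp (-2*δ) with hu_def
  have hu : 0 < u := Real.exp_pos _
  have hu1 : u ≤ 1 := Real.exp_le_one_iff.2 (by linarith)
  have hδ' : ∀ i, |s' i - s i| ≤ δ := fun i => by rw [abs_sub_comm]; exact hδ i
  have pw : ∀ i, |softmax s i - softmax s' i|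
      ≤ (1 - u)/2 * (softmax s i + softmax s' i + |softmax s i - softmax s' i|) := by
    intro i
    have p1 := softmax_pointwise hK s s' δ hδ i
    have p2 := softmax_pointwise hK s' s δ hδ' i
    have n1 := softmax_nonneg hK s i
    have n2 := softmax_nonneg hK s' i
    rcases abs_cases (softmax s i - softmax s' i) with ⟨he, hc⟩ | ⟨he, hc⟩ <;> rw [he] <;> nlinarith
  have hsum := Finset.sum_le_sum (fun i (_ : i ∈ Finset.univ) => pw i)
  rw [← Finset.mul_sum] at hsum
  simp only [Finset.sum_add_distrib, softmax_sum_eq_one hK s, softmax_sum_eq_one hK s'] at hsum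
  have hkey := key_exp_ineq δ hδ0
  rw [← hu_def] at hkey
  set T := ∑ i, |softmax s i - softmax s' i|
  nlinarith

theorem logit_bound {D K : ℕ} (σ Rx Ry : ℝ) (hσ : 0 < σ)
    (x : EuclideanSpace ℝ (Fin D)) (hx : ‖x‖ ≤ Rx)
    (y y' : Fin K → EuclideanSpace ℝ (Fin D))
    (hy : ∀ i, ‖y i‖ ≤ Ry) (hy' : ∀ i, ‖y' i‖ ≤ Ry) (i : Fin K) :
    |gaussLogits σ x y i - gaussLogits σ x y' i| ≤ ((Rx + Ry)/σ^2) * ‖y i - y' i‖ := by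
  have hσ2 : (0:ℝ) < σ^2 := by positivity
  set p := ‖x - y i‖ with hp
  set q := ‖x - y' i‖ with hq
  set d := ‖y i - y' i‖ with hd
  have hpq : |q - p| ≤ d := by
    have h := abs_norm_sub_norm_le (x - y' i) (x - y i)
    have e : x - y' i - (x - y i) = y i - y' i := by abel
    rw [e] at h
    exact h
  have hple : p ≤ Rx + Ry := le_trans (norm_sub_le _ _) (by have := hy i; linarith)
  have hqle : q ≤ Rx + Ry := le_trans (norm_sub_le _ _) (by have := hy' i; linarith)
  have hp0 : 0 ≤ p := norm_nonneg _
  have hq0 : 0 ≤ q := norm_nonneg _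
  have hd0 : 0 ≤ d := norm_nonneg _
  have heq : gaussLogits σ x y i - gaussLogits σ x y' i = (q^2 - p^2) / (2*σ^2) := by
    unfold gaussLogits
    rw [← hp, ← hq]
    ring
  rw [heq, abs_div, abs_of_pos (show (0:ℝ) < 2*σ^2 by positivity),
    div_le_iff₀ (show (0:ℝ) < 2*σ^2 by positivity)]
  have h2 : |q^2 - p^2| ≤ (p + q) * d := by
    have hfac : q^2 - p^2 = (q - p) * (q + p) := by ring
    rw [hfac, abs_mul, abs_of_nonneg (show (0:ℝ) ≤ q + p by linarith)]
    nlinarith [abs_nonneg (q - p)]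
  have h3 : (Rx + Ry)/σ^2 * d * (2*σ^2) = 2*(Rx + Ry)*d := by
    field_simp
  rw [h3]
  nlinarith [mul_nonneg hd0 (show (0:ℝ) ≤ 2*(Rx+Ry) - (p+q) by linarith)]

/-- Lipschitz transfer for the softmax-weighted score map. -/
theorem scoreMap_lipschitz_in_centers {D K : ℕ} (σ Rx Ry : ℝ) (hσ : 0 < σ)
    (x : EuclideanSpace ℝ (Fin D)) (hx : ‖x‖ ≤ Rx)
    (y y' : Fin K → EuclideanSpace ℝ (Fin D))
    (hy : ∀ i, ‖y i‖ ≤ Ry) (hy' : ∀ i, ‖y' i‖ ≤ Ry) :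
    ‖scoreMap σ x y - scoreMap σ x y'‖
      ≤ ((1 + 2 * Ry * (Rx + Ry) / σ ^ 2) / σ ^ 2) * ‖y - y'‖ := by
  rcases Nat.eq_zero_or_pos K with rfl | hK
  · have hyy : y = y' := funext fun i => i.elim0
    rw [hyy, sub_self, norm_zero, sub_self, norm_zero, mul_zero]
  have hσ2 : (0:ℝ) < σ^2 := by positivity
  have hRx : 0 ≤ Rx := le_trans (norm_nonneg x) hx
  have hRy : 0 ≤ Ry := le_trans (norm_nonneg _) (hy ⟨0, hK⟩)
  set w := softmax (gaussLogits σ x y) with hw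
  set w' := softmax (gaussLogits σ x y') with hw'
  set M := ‖y - y'‖ with hMdef
  have hM0 : 0 ≤ M := norm_nonneg _
  have hMi : ∀ i, ‖y i - y' i‖ ≤ M := fun i => by
    simpa using norm_le_pi_norm (y - y') i
  set δ := (Rx + Ry)/σ^2 * M with hδdef
  have hδ0 : 0 ≤ δ := by positivity
  have hlogit : ∀ i, |gaussLogits σ x y i - gaussLogits σ x y' i| ≤ δ := fun i =>
    le_trans (logit_bound σ Rx Ry hσ x hx y y' hy hy' i)
      (mul_le_mul_of_nonneg_left (hMi i) (by positivity))
  have hT : ∑ i, |w' i - w i| ≤ 2 * δ := by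
    have := softmax_l1 hK _ _ δ hδ0 hlogit
    rw [← hw, ← hw'] at this
    calc ∑ i, |w' i - w i| = ∑ i, |w i - w' i| := by
          apply Finset.sum_congr rfl; intro i _; rw [abs_sub_comm]
      _ ≤ 2 * δ := this
  have hdiff : scoreMap σ x y - scoreMap σ x y'
      = (σ^2)⁻¹ • ((∑ i, w' i • y' i) - ∑ i, w i • y i) := by
    unfold scoreMap
    rw [← hw, ← hw', smul_sub]
    abel
  have hsplit : (∑ i, w' i • y' i) - ∑ i, w i • y i
      = ∑ i, ((w' i - w i) • y i + w' i • (y' i - y i)) := by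
    rw [← Finset.sum_sub_distrib]
    apply Finset.sum_congr rfl
    intro i _
    rw [sub_smul, smul_sub]
    abel
  have hterm : ∀ i, ‖(w' i - w i) • y i + w' i • (y' i - y i)‖
      ≤ |w' i - w i| * Ry + w' i * M := by
    intro i
    calc ‖(w' i - w i) • y i + w' i • (y' i - y i)‖
        ≤ ‖(w' i - w i) • y i‖ + ‖w' i • (y' i - y i)‖ := norm_add_le _ _
      _ = |w' i - w i| * ‖y i‖ + |w' i| * ‖y' i - y i‖ := by rw [norm_smul, norm_smul]; rfl
      _ ≤ |w' i - w i| * Ry + w' i * M := by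
          have hwi : |w' i| = w' i := abs_of_nonneg (softmax_nonneg hK _ i)
          rw [hwi]
          have h1 := mul_le_mul_of_nonneg_left (hy i) (abs_nonneg (w' i - w i))
          have h2 : ‖y' i - y i‖ ≤ M := by rw [norm_sub_rev]; exact hMi i
          have h3 := mul_le_mul_of_nonneg_left h2 (softmax_nonneg hK (gaussLogits σ x y') i)
          rw [← hw'] at h3
          linarith
  have hnorm : ‖(∑ i, w' i • y' i) - ∑ i, w i • y i‖ ≤ Ry * (2*δ) + M := by
    rw [hsplit]
    calc ‖∑ i, ((w' i - w i) • y i + w' i • (y' i - y i))‖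
        ≤ ∑ i, ‖(w' i - w i) • y i + w' i • (y' i - y i)‖ := norm_sum_le _ _
      _ ≤ ∑ i, (|w' i - w i| * Ry + w' i * M) :=
          Finset.sum_le_sum fun i _ => hterm i
      _ = (∑ i, |w' i - w i|) * Ry + (∑ i, w' i) * M := by
          rw [Finset.sum_add_distrib, Finset.sum_mul, Finset.sum_mul]
      _ = (∑ i, |w' i - w i|) * Ry + M := by
          rw [hw', softmax_sum_eq_one hK, one_mul]
      _ ≤ Ry * (2*δ) + M := by nlinarith
  calc ‖scoreMap σ x y - scoreMap σ x y'‖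
      = (σ^2)⁻¹ * ‖(∑ i, w' i • y' i) - ∑ i, w i • y i‖ := by
        rw [hdiff, norm_smul]
        congr 1
        rw [Real.norm_eq_abs, abs_of_pos (by positivity)]
    _ ≤ (σ^2)⁻¹ * (Ry * (2*δ) + M) := by
        apply mul_le_mul_of_nonneg_left hnorm (by positivity)
    _ = ((1 + 2 * Ry * (Rx + Ry) / σ ^ 2) / σ ^ 2) * M := by
        rw [hδdef]
        field_simp
        ring
end

section
/- Self-normalized importance sampling error bound: Let q, p be probability densities on ℝ^d with p ≪ q, w = p/q, and h : ℝ^d → ℝ^D measurable with ‖h(u)‖ ≤ B for all u. Let U_1,…,U_K be i.i.d. ∼ q, A_K = (1/K)Σ_i w(U_i) h(U_i), B_K = (1/K)Σ_i w(U_i), and m = E_p[h(U)]. Then E‖A_K/B_K − m‖² ≤ (32 B²/K) D₂(p‖q), where D₂(p‖q) = E_q[(p/q)²] = 1 + χ²(p‖q). -/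
open MeasureTheory
open scoped NNReal ENNReal

section Helpers
variable {α : Type*} [MeasurableSpace α] (μ : Measure α) [IsProbabilityMeasure μ] {K : ℕ}

lemma pi_single (i : Fin K) {φ : α → ℝ} (hφ : Integrable φ μ) :
    Integrable (fun x : Fin K → α => φ (x i)) (Measure.pi fun _ => μ) ∧
    ∫ x : Fin K → α, φ (x i) ∂(Measure.pi fun _ => μ) = ∫ a, φ a ∂μ := by
  letI : MeasureSpace α := ⟨μ⟩
  have hvol : (Measure.pi fun _ : Fin K => μ) = (volume : Measure (Fin K → α)) :=
    (volume_pi).symm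
  set ψ : Fin K → α → ℝ := fun l => if l = i then φ else fun _ => 1 with hψ
  have hvμ : (volume : Measure α) = μ := rfl
  have hψint : ∀ l, Integrable (ψ l) volume := by
    intro l
    rw [hvμ]
    by_cases hl : l = i <;> simp [hψ, hl, hφ, integrable_const]
  have hψeq : ∀ x : Fin K → α, φ (x i) = ∏ l, ψ l (x l) := by
    intro x
    rw [Finset.prod_eq_single i (fun b _ hb => by simp [hψ, hb]) (by simp)]
    simp [hψ]
  constructor
  · rw [hvol]
    have := Integrable.fintype_prod (𝕜 := ℝ) hψint
    apply this.congr
    filter_upwards with x using (hψeq x).symm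
  · rw [hvol]
    calc ∫ x : Fin K → α, φ (x i) = ∫ x : Fin K → α, ∏ l, ψ l (x l) := by
          congr 1; ext x; exact hψeq x
      _ = ∏ l, ∫ a, ψ l a := integral_fintype_prod_eq_prod ψ
      _ = ∫ a, φ a ∂μ := by
          rw [Finset.prod_eq_single i (fun b _ hb => by simp [hψ, hb]) (by simp)]
          simp [hψ, hvμ]

lemma pi_pair {i j : Fin K} (hij : i ≠ j) {φ χ : α → ℝ}
    (hφ : Integrable φ μ) (hχ : Integrable χ μ) :
    Integrable (fun x : Fin K → α => φ (x i) * χ (x j)) (Measure.pi fun _ => μ) ∧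
    ∫ x : Fin K → α, φ (x i) * χ (x j) ∂(Measure.pi fun _ => μ)
      = (∫ a, φ a ∂μ) * ∫ a, χ a ∂μ := by
  letI : MeasureSpace α := ⟨μ⟩
  have hvol : (Measure.pi fun _ : Fin K => μ) = (volume : Measure (Fin K → α)) :=
    (volume_pi).symm
  set ψ : Fin K → α → ℝ := fun l => if l = i then φ else if l = j then χ else fun _ => 1 with hψ
  have hvμ : (volume : Measure α) = μ := rfl
  have hψint : ∀ l, Integrable (ψ l) volume := by
    intro l
    rw [hvμ]
    by_cases hl : l = i
    · simpa [hψ, hl] using hφ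
    · by_cases hl' : l = j
      · simpa [hψ, hl, hl', Ne.symm hij] using hχ
      · simp [hψ, hl, hl', integrable_const]
  have hmemj : j ∈ Finset.univ.erase i := Finset.mem_erase.2 ⟨(Ne.symm hij), Finset.mem_univ j⟩
  have hψeq : ∀ x : Fin K → α, φ (x i) * χ (x j) = ∏ l, ψ l (x l) := by
    intro x
    rw [← Finset.mul_prod_erase Finset.univ (fun l => ψ l (x l)) (Finset.mem_univ i),
      ← Finset.mul_prod_erase _ (fun l => ψ l (x l)) hmemj,
      Finset.prod_eq_one (fun b hb => ?_)]
    · simp [hψ, Ne.symm hij]; try ring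
    · simp only [Finset.mem_erase] at hb
      simp [hψ, hb.1, hb.2.1]
  have hψprod : ∏ l, ∫ a, ψ l a = (∫ a, φ a ∂μ) * ∫ a, χ a ∂μ := by
    rw [← Finset.mul_prod_erase Finset.univ (fun l => ∫ a, ψ l a) (Finset.mem_univ i),
      ← Finset.mul_prod_erase _ (fun l => ∫ a, ψ l a) hmemj,
      Finset.prod_eq_one (fun b hb => ?_)]
    · simp [hψ, Ne.symm hij, hvμ]
    · simp only [Finset.mem_erase] at hb
      simp [hψ, hb.1, hb.2.1]
  constructor
  · rw [hvol]
    exact (Integrable.fintype_prod (𝕜 := ℝ) hψint).congr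
      (by filter_upwards with x using (hψeq x).symm)
  · rw [hvol]
    calc ∫ x : Fin K → α, φ (x i) * χ (x j) = ∫ x : Fin K → α, ∏ l, ψ l (x l) := by
          congr 1; ext x; exact hψeq x
      _ = ∏ l, ∫ a, ψ l a := integral_fintype_prod_eq_prod ψ
      _ = _ := hψprod
lemma var_le (hK : 0 < K) {f : α → ℝ} (hf : Integrable f μ)
    (hf2 : Integrable (fun a => f a ^ 2) μ) {c : ℝ} (hc : ∫ a, f a ∂μ = c) :
    Integrable (fun x : Fin K → α => ((1 / (K:ℝ)) * ∑ i, f (x i) - c) ^ 2)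
      (Measure.pi fun _ => μ) ∧
    ∫ x : Fin K → α, ((1 / (K:ℝ)) * ∑ i, f (x i) - c) ^ 2 ∂(Measure.pi fun _ => μ)
      ≤ (∫ a, f a ^ 2 ∂μ) / K := by
  set F : α → ℝ := fun a => f a - c with hF
  have hFint : Integrable F μ := hf.sub (integrable_const c)
  have hF0 : ∫ a, F a ∂μ = 0 := by
    simp [hF, integral_sub hf (integrable_const c), hc, measure_univ]
  have hF2 : Integrable (fun a => F a ^ 2) μ := by
    have : (fun a => F a ^ 2) = fun a => f a ^ 2 - (2 * c) * f a + c ^ 2 := by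
      ext a; simp [hF]; ring
    rw [this]
    exact ((hf2.sub (hf.const_mul _)).add (integrable_const _))
  have hF2val : ∫ a, F a ^ 2 ∂μ ≤ ∫ a, f a ^ 2 ∂μ := by
    have : (fun a => F a ^ 2) = fun a => f a ^ 2 - (2 * c) * f a + c ^ 2 := by
      ext a; simp [hF]; ring
    have hint1 : Integrable (fun a => f a ^ 2 - 2 * c * f a) μ := hf2.sub (hf.const_mul _)
    rw [this, integral_add hint1 (integrable_const _),
      integral_sub hf2 (hf.const_mul _), integral_const]
    simp only [integral_const_mul, hc, Measure.real, measure_univ, ENNReal.toReal_one, one_smul]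
    nlinarith [sq_nonneg c]
  -- pointwise expansion
  have hKne : (K : ℝ) ≠ 0 := Nat.cast_ne_zero.2 hK.ne'
  have hexp : ∀ x : Fin K → α,
      ((1 / (K:ℝ)) * ∑ i, f (x i) - c) ^ 2
        = (1 / (K:ℝ)^2) * ∑ i, ∑ j, F (x i) * F (x j) := by
    intro x
    have h1 : (1 / (K:ℝ)) * ∑ i, f (x i) - c = (1 / (K:ℝ)) * ∑ i, F (x i) := by
      simp only [hF, Finset.sum_sub_distrib, Finset.sum_const, Finset.card_univ,
        Fintype.card_fin, nsmul_eq_mul]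
      field_simp
    rw [h1, mul_pow, ← Finset.sum_mul_sum]
    ring
  have hterm : ∀ i j : Fin K,
      Integrable (fun x : Fin K → α => F (x i) * F (x j)) (Measure.pi fun _ => μ) ∧
      ∫ x : Fin K → α, F (x i) * F (x j) ∂(Measure.pi fun _ => μ)
        = if i = j then ∫ a, F a ^ 2 ∂μ else 0 := by
    intro i j
    by_cases hij : i = j
    · subst hij
      have := pi_single μ i (φ := fun a => F a ^ 2) hF2
      refine ⟨this.1.congr (by filter_upwards with x; simp [sq]), ?_⟩
      rw [if_pos rfl, ← this.2]
      congr 1; ext x; simp [sq]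
    · have := pi_pair μ hij hFint hFint
      exact ⟨this.1, by rw [this.2, hF0, if_neg hij]; ring⟩
  have hsumint : Integrable
      (fun x : Fin K → α => ∑ i, ∑ j : Fin K, F (x i) * F (x j)) (Measure.pi fun _ => μ) := by
    apply integrable_finset_sum _ fun i _ => integrable_finset_sum _ fun j _ => (hterm i j).1
  constructor
  · have : (fun x : Fin K → α => ((1 / (K:ℝ)) * ∑ i, f (x i) - c) ^ 2)
        = fun x => (1 / (K:ℝ)^2) * ∑ i, ∑ j, F (x i) * F (x j) := by
      ext x; exact hexp x
    rw [this]
    exact hsumint.const_mul _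
  · have hval : ∫ x : Fin K → α, ((1 / (K:ℝ)) * ∑ i, f (x i) - c) ^ 2 ∂(Measure.pi fun _ => μ)
        = (1 / (K:ℝ)^2) * (K * ∫ a, F a ^ 2 ∂μ) := by
      calc ∫ x : Fin K → α, ((1 / (K:ℝ)) * ∑ i, f (x i) - c) ^ 2 ∂(Measure.pi fun _ => μ)
          = ∫ x : Fin K → α, (1 / (K:ℝ)^2) * ∑ i, ∑ j, F (x i) * F (x j)
            ∂(Measure.pi fun _ => μ) := by congr 1; ext x; exact hexp x
        _ = (1 / (K:ℝ)^2) * ∫ x : Fin K → α, ∑ i, ∑ j, F (x i) * F (x j)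
            ∂(Measure.pi fun _ => μ) := integral_const_mul _ _
        _ = (1 / (K:ℝ)^2) * ∑ i, ∑ j : Fin K,
              ∫ x : Fin K → α, F (x i) * F (x j) ∂(Measure.pi fun _ => μ) := by
            rw [integral_finset_sum _ fun i _ => integrable_finset_sum _ fun j _ => (hterm i j).1]
            congr 1
            exact Finset.sum_congr rfl fun i _ =>
              integral_finset_sum _ fun j _ => (hterm i j).1
        _ = (1 / (K:ℝ)^2) * (K * ∫ a, F a ^ 2 ∂μ) := by
            congr 1
            simp only [(fun i j => (hterm i j).2)]
            simp [Finset.sum_ite_eq]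
    have hFnn : 0 ≤ ∫ a, F a ^ 2 ∂μ := integral_nonneg fun a => sq_nonneg _
    have heq : (1 / (K:ℝ)^2) * ((K:ℝ) * ∫ a, F a ^ 2 ∂μ) = (∫ a, F a ^ 2 ∂μ) * (K:ℝ)⁻¹ := by
      field_simp
    rw [hval, heq, div_eq_mul_inv]
    exact mul_le_mul_of_nonneg_right hF2val (by positivity)

end Helpers

lemma ptwise_bound {D : ℕ} (B : ℝ) (hB : 0 ≤ B) (m v : EuclideanSpace ℝ (Fin D)) (s : ℝ)
    (hs : 0 ≤ s) (hmB : ‖m‖ ≤ B) (hv : ‖v‖ ≤ s * B) :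
    ‖s⁻¹ • v - m‖ ^ 2 ≤ 8 * ‖v - m‖ ^ 2 + 16 * B ^ 2 * (s - 1) ^ 2 := by
  rcases le_or_gt (1/2 : ℝ) s with hhalf | hhalf
  · have hspos : 0 < s := lt_of_lt_of_le (by norm_num) hhalf
    have h1 : s⁻¹ • v - m = s⁻¹ • (v - s • m) := by
      rw [smul_sub, smul_smul, inv_mul_cancel₀ hspos.ne', one_smul]
    have h2 : v - s • m = (v - m) - (s - 1) • m := by
      rw [sub_smul, one_smul]; abel
    have h3 : ‖v - s • m‖ ≤ ‖v - m‖ + |s - 1| * B := by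
      rw [h2]
      calc ‖(v - m) - (s - 1) • m‖ ≤ ‖v - m‖ + ‖(s-1) • m‖ := norm_sub_le _ _
        _ ≤ ‖v - m‖ + |s - 1| * B := by
            rw [norm_smul, Real.norm_eq_abs]
            exact add_le_add le_rfl (mul_le_mul_of_nonneg_left hmB (abs_nonneg _))
    have h4 : ‖s⁻¹ • v - m‖ ≤ 2 * (‖v - m‖ + |s - 1| * B) := by
      rw [h1, norm_smul, Real.norm_eq_abs, abs_of_pos (inv_pos.2 hspos)]
      calc s⁻¹ * ‖v - s • m‖ ≤ 2 * ‖v - s • m‖ := by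
            apply mul_le_mul_of_nonneg_right _ (norm_nonneg _)
            rw [show (2:ℝ) = (1/2)⁻¹ by norm_num]
            exact inv_anti₀ (by norm_num) hhalf
        _ ≤ 2 * (‖v - m‖ + |s - 1| * B) := by linarith [h3]
    have h5 := sq_nonneg (‖v - m‖ - |s - 1| * B)
    have h6 : ‖s⁻¹ • v - m‖ ^ 2 ≤ (2 * (‖v - m‖ + |s - 1| * B))^2 :=
      pow_le_pow_left₀ (norm_nonneg _) h4 2
    have h7 : (|s-1|)^2 = (s-1)^2 := sq_abs _
    nlinarith [norm_nonneg (v - m), abs_nonneg (s-1), sq_nonneg (‖v-m‖ - abs (s-1) * B)]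
  · have hvB : ‖s⁻¹ • v‖ ≤ B := by
      rcases eq_or_lt_of_le hs with h0 | h0
      · have : ‖v‖ ≤ 0 := by rw [← h0] at hv; simpa using hv
        have hv0 : v = 0 := norm_le_zero_iff.1 this
        simp [hv0, hB]
      · rw [norm_smul, Real.norm_eq_abs, abs_of_pos (inv_pos.2 h0)]
        calc s⁻¹ * ‖v‖ ≤ s⁻¹ * (s * B) :=
              mul_le_mul_of_nonneg_left hv (le_of_lt (inv_pos.2 h0))
          _ = B := by field_simp
    have h1 : ‖s⁻¹ • v - m‖ ≤ 2 * B := by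
      calc ‖s⁻¹ • v - m‖ ≤ ‖s⁻¹ • v‖ + ‖m‖ := norm_sub_le _ _
        _ ≤ 2 * B := by linarith
    have h2 : (1/2 : ℝ) ≤ |s - 1| := by
      rw [abs_sub_comm, abs_of_pos (by linarith : (0:ℝ) < 1 - s)]; linarith
    have h3 : ‖s⁻¹ • v - m‖ ^ 2 ≤ 4 * B ^ 2 := by nlinarith [norm_nonneg (s⁻¹ • v - m)]
    have h4 : (1/4 : ℝ) ≤ (s - 1)^2 := by nlinarith
    nlinarith [sq_nonneg (norm (v - m)), norm_nonneg (v-m), sq_nonneg B]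

/-- Self-normalized importance sampling error bound: with `p ≪ q`, `w = p/q`,
`‖h‖ ≤ B`, i.i.d. anchors `U_1,…,U_K ∼ q`, `A_K = (1/K)Σ w(U_i) h(U_i)`,
`B_K = (1/K)Σ w(U_i)`, and `m = E_p[h(U)]`,
`E‖A_K/B_K − m‖² ≤ (32 B²/K) D₂(p‖q)` where `D₂(p‖q) = E_q[(p/q)²]`. -/
theorem snis_error_bound {d D K : ℕ} (hK : 0 < K) (B : ℝ) (hB : 0 ≤ B)
    (p q : EuclideanSpace ℝ (Fin d) → ℝ)
    (hp0 : ∀ u, 0 ≤ p u) (hq0 : ∀ u, 0 ≤ q u)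
    (hpmeas : Measurable p) (hqmeas : Measurable q)
    (hp1 : ∫ u, p u = 1) (hq1 : ∫ u, q u = 1)
    (hpint : Integrable p) (hqint : Integrable q)
    (habs : ∀ u, q u = 0 → p u = 0)
    (h : EuclideanSpace ℝ (Fin d) → EuclideanSpace ℝ (Fin D))
    (hmeas : Measurable h) (hhB : ∀ u, ‖h u‖ ≤ B)
    (m : EuclideanSpace ℝ (Fin D)) (hm : m = ∫ u, p u • h u)
    (D2 : ℝ) (hD2 : D2 = ∫ u, (p u) ^ 2 / q u)
    (hD2int : Integrable (fun u => (p u) ^ 2 / q u)) :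
    (∫ U : Fin K → EuclideanSpace ℝ (Fin d),
        ‖((1 / (K : ℝ)) * ∑ i, p (U i) / q (U i))⁻¹ •
            ((1 / (K : ℝ)) • ∑ i, (p (U i) / q (U i)) • h (U i)) - m‖ ^ 2
      ∂(Measure.pi fun _ => volume.withDensity fun u => ENNReal.ofReal (q u)))
    ≤ 32 * B ^ 2 / (K : ℝ) * D2 := by
  set μ : Measure (EuclideanSpace ℝ (Fin d)) := volume.withDensity fun u => ENNReal.ofReal (q u) with hμ
  have hqm : Measurable fun u => Real.toNNReal (q u) := hqmeas.real_toNNReal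
  have hdens : μ = volume.withDensity fun u => ((Real.toNNReal (q u) : ℝ≥0) : ℝ≥0∞) := rfl
  -- μ is a probability measure
  have hprob : IsProbabilityMeasure μ := by
    constructor
    rw [hμ, withDensity_apply _ MeasurableSet.univ, setLIntegral_univ,
      ← ofReal_integral_eq_lintegral_ofReal hqint (Filter.Eventually.of_forall hq0), hq1,
      ENNReal.ofReal_one]
  set w : EuclideanSpace ℝ (Fin d) → ℝ := fun u => p u / q u with hw
  have hw0 : ∀ u, 0 ≤ w u := fun u => div_nonneg (hp0 u) (hq0 u)
  have hwmeas : Measurable w := hpmeas.div hqmeas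
  have hqw : ∀ u, q u * w u = p u := by
    intro u
    by_cases h0 : q u = 0
    · simp [hw, h0, habs u h0]
    · show q u * (p u / q u) = p u
      field_simp
  have hqw2 : ∀ u, q u * w u ^ 2 = p u ^ 2 / q u := by
    intro u
    by_cases h0 : q u = 0
    · simp [hw, h0, habs u h0]
    · show q u * (p u / q u) ^ 2 = p u ^ 2 / q u
      field_simp
  have hsmul : ∀ (u : EuclideanSpace ℝ (Fin d)) (r : ℝ), Real.toNNReal (q u) • r = q u * r := by
    intro u r; simp [NNReal.smul_def, Real.coe_toNNReal _ (hq0 u)]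
  -- integrability / integrals of w and w^2 wrt μ
  have hwint : Integrable w μ := by
    rw [hdens, integrable_withDensity_iff_integrable_smul hqm]
    apply hpint.congr
    filter_upwards with u
    rw [hsmul u, hqw u]
  have hwval : ∫ u, w u ∂μ = 1 := by
    rw [hdens, integral_withDensity_eq_integral_smul hqm]
    rw [show (fun u => Real.toNNReal (q u) • w u) = p by ext u; rw [hsmul u, hqw u]]
    exact hp1
  have hw2int : Integrable (fun u => w u ^ 2) μ := by
    rw [hdens, integrable_withDensity_iff_integrable_smul hqm]
    apply hD2int.congr
    filter_upwards with u
    rw [hsmul u, hqw2 u]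
  have hw2val : ∫ u, w u ^ 2 ∂μ = D2 := by
    rw [hdens, integral_withDensity_eq_integral_smul hqm]
    rw [show (fun u => Real.toNNReal (q u) • w u ^ 2) = fun u => p u ^2 / q u by
      ext u; rw [hsmul u, hqw2 u]]
    exact hD2.symm
  -- the vector function g = w • h
  set g : EuclideanSpace ℝ (Fin d) → EuclideanSpace ℝ (Fin D) := fun u => w u • h u with hg
  have hphmeas : Measurable (fun u => p u • h u) := hpmeas.smul hmeas
  have hphint : Integrable (fun u => p u • h u) := by
    apply Integrable.mono' (hpint.const_mul B) hphmeas.aestronglyMeasurable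
    filter_upwards with u
    rw [norm_smul, Real.norm_eq_abs, abs_of_nonneg (hp0 u), mul_comm (B)]
    exact mul_le_mul_of_nonneg_left (hhB u) (hp0 u)
  have hgint : Integrable g μ := by
    rw [hdens, integrable_withDensity_iff_integrable_smul hqm]
    apply hphint.congr
    filter_upwards with u
    show p u • h u = Real.toNNReal (q u) • w u • h u
    rw [NNReal.smul_def, Real.coe_toNNReal _ (hq0 u), smul_smul, hqw u]
  have hgval : ∫ u, g u ∂μ = m := by
    rw [hdens, integral_withDensity_eq_integral_smul hqm]
    rw [show (fun u => Real.toNNReal (q u) • g u) = fun u => p u • h u by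
      funext u
      show Real.toNNReal (q u) • w u • h u = p u • h u
      rw [NNReal.smul_def, Real.coe_toNNReal _ (hq0 u), smul_smul, hqw u]]
    exact hm.symm
  have hmB : ‖m‖ ≤ B := by
    rw [hm]
    calc ‖∫ u, p u • h u‖ ≤ ∫ u, ‖p u • h u‖ := norm_integral_le_integral_norm _
      _ ≤ ∫ u, B * p u := by
          apply integral_mono hphint.norm (hpint.const_mul B)
          intro u
          show ‖p u • h u‖ ≤ B * p u
          rw [norm_smul, Real.norm_eq_abs, abs_of_nonneg (hp0 u), mul_comm (B)]
          exact mul_le_mul_of_nonneg_left (hhB u) (hp0 u)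
      _ = B := by rw [integral_const_mul, hp1, mul_one]
  -- norm-squared as coordinate sum
  have hnormsq : ∀ x : EuclideanSpace ℝ (Fin D), ‖x‖ ^ 2 = ∑ k, (x k) ^ 2 := by
    intro x
    rw [EuclideanSpace.norm_eq, Real.sq_sqrt (Finset.sum_nonneg fun k _ => sq_nonneg _)]
    simp [Real.norm_eq_abs, sq_abs]
  have hcoord : ∀ (x : EuclideanSpace ℝ (Fin D)) (k : Fin D), |x k| ≤ ‖x‖ := by
    intro x k
    have h1 : (x k) ^ 2 ≤ ‖x‖ ^ 2 := by
      rw [hnormsq]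
      exact Finset.single_le_sum (fun k _ => sq_nonneg (x k)) (Finset.mem_univ k)
    have h2 := Real.sqrt_le_sqrt h1
    rwa [Real.sqrt_sq_eq_abs, Real.sqrt_sq (norm_nonneg x)] at h2
  -- coordinate functions
  set fk : Fin D → EuclideanSpace ℝ (Fin d) → ℝ := fun k u => w u * h u k with hfk
  have hfkb : ∀ k u, |fk k u| ≤ B * w u := by
    intro k u
    rw [hfk, abs_mul, abs_of_nonneg (hw0 u), mul_comm (B)]
    exact mul_le_mul_of_nonneg_left ((hcoord (h u) k).trans (hhB u)) (hw0 u)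
  have hfkmeas : ∀ k, Measurable (fk k) := by
    intro k
    exact hwmeas.mul (((EuclideanSpace.proj (𝕜 := ℝ) k).continuous.measurable).comp hmeas)
  have hfkint : ∀ k, Integrable (fk k) μ := by
    intro k
    apply Integrable.mono' (hwint.const_mul B) (hfkmeas k).aestronglyMeasurable
    filter_upwards with u using hfkb k u
  have hfk2int : ∀ k, Integrable (fun u => fk k u ^ 2) μ := by
    intro k
    apply Integrable.mono' (hw2int.const_mul (B^2)) ((hfkmeas k).pow_const 2).aestronglyMeasurable
    filter_upwards with u
    rw [Real.norm_eq_abs, abs_of_nonneg (sq_nonneg _)]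
    calc fk k u ^ 2 ≤ (B * w u)^2 := by
          rw [← sq_abs (fk k u)]
          exact pow_le_pow_left₀ (abs_nonneg _) (hfkb k u) 2
      _ = B^2 * w u ^ 2 := by ring
  have hfkval : ∀ k, ∫ u, fk k u ∂μ = m k := by
    intro k
    have hcc := (EuclideanSpace.proj (𝕜 := ℝ) k).integral_comp_comm hgint
    rw [hgval] at hcc
    rw [show fk k = fun u => EuclideanSpace.proj (𝕜 := ℝ) k (g u) from rfl, hcc]
    rfl
  -- variance bounds per coordinate
  haveI := hprob
  have hvar := fun k => var_le μ hK (hfkint k) (hfk2int k) (hfkval k)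
  have hvarw := var_le μ hK hwint hw2int hwval
  have hKpos : (0:ℝ) < K := Nat.cast_pos.2 hK
  set G : (Fin K → EuclideanSpace ℝ (Fin d)) → ℝ :=
    fun x => ‖(1/(K:ℝ)) • (∑ i, w (x i) • h (x i)) - m‖^2 with hG
  have hGeq : G = fun x => ∑ k, ((1/(K:ℝ)) * ∑ i, fk k (x i) - m k)^2 := by
    funext x
    show ‖(1/(K:ℝ)) • (∑ i, w (x i) • h (x i)) - m‖^2 = _
    rw [hnormsq]
    apply Finset.sum_congr rfl
    intro k _
    congr 1
    rw [PiLp.sub_apply, PiLp.smul_apply]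
    congr 1
    rw [smul_eq_mul]
    congr 1
    rw [WithLp.ofLp_sum]
    exact Finset.sum_apply k Finset.univ _
  have hGint : Integrable G (Measure.pi fun _ => μ) := by
    rw [hGeq]
    exact integrable_finset_sum _ fun k _ => (hvar k).1
  have hsumfk2 : ∑ k, ∫ u, fk k u ^ 2 ∂μ ≤ B^2 * D2 := by
    have hsint : Integrable (fun u => ∑ k, fk k u ^ 2) μ :=
      integrable_finset_sum _ fun k _ => hfk2int k
    rw [← integral_finset_sum _ fun k _ => hfk2int k]
    calc ∫ u, ∑ k, fk k u ^ 2 ∂μ ≤ ∫ u, B^2 * w u ^ 2 ∂μ := by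
          apply integral_mono hsint (hw2int.const_mul (B^2))
          intro u
          show ∑ k, fk k u ^ 2 ≤ B^2 * w u ^2
          have : ∑ k, fk k u ^ 2 = w u ^2 * ‖h u‖^2 := by
            rw [hnormsq]
            rw [Finset.mul_sum]
            apply Finset.sum_congr rfl
            intro k _
            rw [hfk]; ring
          rw [this]
          have h1 : ‖h u‖^2 ≤ B^2 := pow_le_pow_left₀ (norm_nonneg _) (hhB u) 2
          nlinarith [sq_nonneg (w u)]
      _ = B^2 * D2 := by rw [integral_const_mul, hw2val]
  have hGval : ∫ x, G x ∂(Measure.pi fun _ => μ) ≤ B^2 * D2 / K := by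
    calc ∫ x, G x ∂(Measure.pi fun _ => μ)
        = ∑ k, ∫ x : Fin K → EuclideanSpace ℝ (Fin d),
            ((1/(K:ℝ)) * ∑ i, fk k (x i) - m k)^2 ∂(Measure.pi fun _ => μ) := by
          rw [hGeq]
          exact integral_finset_sum _ fun k _ => (hvar k).1
      _ ≤ ∑ k, (∫ u, fk k u ^ 2 ∂μ) / K := Finset.sum_le_sum fun k _ => (hvar k).2
      _ = (∑ k, ∫ u, fk k u ^ 2 ∂μ) / K := by rw [Finset.sum_div]
      _ ≤ B^2 * D2 / K := by exact div_le_div_of_nonneg_right hsumfk2 hKpos.le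
  set S : (Fin K → EuclideanSpace ℝ (Fin d)) → ℝ :=
    fun x => ((1/(K:ℝ)) * ∑ i, w (x i) - 1)^2 with hS
  have hSint : Integrable S (Measure.pi fun _ => μ) := hvarw.1
  have hSval : ∫ x, S x ∂(Measure.pi fun _ => μ) ≤ D2 / K := by
    have := hvarw.2
    rwa [hw2val] at this
  have key : ∀ x : Fin K → EuclideanSpace ℝ (Fin d),
      ‖((1/(K:ℝ)) * ∑ i, w (x i))⁻¹ • ((1/(K:ℝ)) • ∑ i, w (x i) • h (x i)) - m‖^2
        ≤ 8 * G x + 16 * B^2 * S x := by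
    intro x
    have hs : 0 ≤ (1/(K:ℝ)) * ∑ i, w (x i) :=
      mul_nonneg (by positivity) (Finset.sum_nonneg fun i _ => hw0 _)
    have hnv : ‖(1/(K:ℝ)) • ∑ i, w (x i) • h (x i)‖ ≤ ((1/(K:ℝ)) * ∑ i, w (x i)) * B := by
      rw [norm_smul, Real.norm_eq_abs, abs_of_nonneg (by positivity : (0:ℝ) ≤ 1/(K:ℝ)),
        mul_assoc]
      apply mul_le_mul_of_nonneg_left _ (by positivity)
      calc ‖∑ i, w (x i) • h (x i)‖ ≤ ∑ i, ‖w (x i) • h (x i)‖ := norm_sum_le _ _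
        _ ≤ ∑ i, w (x i) * B := by
            apply Finset.sum_le_sum
            intro i _
            rw [norm_smul, Real.norm_eq_abs, abs_of_nonneg (hw0 _)]
            exact mul_le_mul_of_nonneg_left (hhB _) (hw0 _)
        _ = (∑ i, w (x i)) * B := (Finset.sum_mul _ _ _).symm
    exact ptwise_bound B hB m _ _ hs hmB hnv
  have hD2nn : 0 ≤ D2 := by
    rw [hD2]
    exact integral_nonneg fun u => div_nonneg (sq_nonneg _) (hq0 u)
  calc (∫ U : Fin K → EuclideanSpace ℝ (Fin d),
        ‖((1 / (K : ℝ)) * ∑ i, w (U i))⁻¹ •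
            ((1 / (K : ℝ)) • ∑ i, w (U i) • h (U i)) - m‖ ^ 2
      ∂(Measure.pi fun _ => μ))
      ≤ ∫ x, (8 * G x + 16 * B^2 * S x) ∂(Measure.pi fun _ => μ) := by
        apply integral_mono_of_nonneg
        · filter_upwards with x using by positivity
        · exact (hGint.const_mul 8).add (hSint.const_mul (16 * B^2))
        · filter_upwards with x using key x
    _ = 8 * (∫ x, G x ∂(Measure.pi fun _ => μ)) +
        16 * B^2 * ∫ x, S x ∂(Measure.pi fun _ => μ) := by
        rw [integral_add (hGint.const_mul 8) (hSint.const_mul (16 * B^2)),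
          integral_const_mul, integral_const_mul]
    _ ≤ 8 * (B^2 * D2 / K) + 16 * B^2 * (D2 / K) := by
        apply add_le_add
        · exact mul_le_mul_of_nonneg_left hGval (by norm_num)
        · exact mul_le_mul_of_nonneg_left hSval (by positivity)
    _ ≤ 32 * B ^ 2 / (K : ℝ) * D2 := by
        have h0 : 0 ≤ B^2 * D2 / K := by positivity
        have e1 : 8 * (B^2 * D2 / (K:ℝ)) + 16 * B^2 * (D2 / K) = 24 * (B^2 * D2 / K) := by
          ring
        have e2 : 32 * B ^ 2 / (K : ℝ) * D2 = 32 * (B^2 * D2 / K) := by ring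
        rw [e1, e2]
        linarith
end

section
/- QMC score discrepancy via Koksma–Hlawka: Under the assumptions of Lemma 2 of the paper, if f₀, f₁,ᵣ : [0,1]^d → ℝ satisfy the Koksma–Hlawka bounds |(1/K)Σⱼ g(zⱼ) − ∫g| ≤ V_HK(g) D*(P_K) for g ∈ {f₀, f₁,₁,…,f₁,_D}, if V_HK(f₀) D*(P_K) ≤ I₀/2 where I₀ = ∫f₀, and if the score estimators s̃ and the exact score s satisfy s̃ − s = (α_t/σ_t²)(m̃ − m) with m = I₁/I₀ (I₁ the vector of ∫f₁,ᵣ) and m̃ the ratio of the corresponding QMC averages, then ‖s̃(y_t) − s(y_t)‖₂ ≤ (2α_t/(σ_t² I₀))(V_HK(f₁) + ‖m‖₂ V_HK(f₀)) D*(P_K), where V_HK(f₁) = Σᵣ V_HK(f₁,ᵣ). -/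
/-- ℓ² norm is bounded by the ℓ¹ norm on `EuclideanSpace`. -/
lemma euclidean_norm_le_sum_abs {D : ℕ} (x : EuclideanSpace ℝ (Fin D)) :
    ‖x‖ ≤ ∑ r, |x r| := by
  have hx : x = ∑ r, EuclideanSpace.single r (x r) := by
    ext j
    rw [WithLp.ofLp_sum, Finset.sum_apply j Finset.univ (fun r => EuclideanSpace.single r (x r))]
    simp [EuclideanSpace.single_apply]
  calc ‖x‖ = ‖∑ r, EuclideanSpace.single r (x r)‖ := by rw [← hx]
    _ ≤ ∑ r, ‖EuclideanSpace.single r (x r)‖ := norm_sum_le _ _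
    _ = ∑ r, |x r| := by simp [EuclideanSpace.norm_single]

/-- QMC score discrepancy via Koksma–Hlawka: assuming the Koksma–Hlawka bounds for
`f₀` and each coordinate of `f₁`, the half-mass condition `V_HK(f₀) D*(P_K) ≤ I₀/2`,
and the score-to-mean identities `s̃ = (α_t/σ_t²)(α_t m̃ − y)`-style relations,
`‖s̃(y_t) − s(y_t)‖ ≤ (2α_t/(σ_t² I₀)) (V_HK(f₁) + ‖m‖ V_HK(f₀)) D*(P_K)`. -/
theorem qmc_score_discrepancy {d D K : ℕ} (hK : 0 < K)
    (αt σt Dstar V0 I0 : ℝ) (V1 : Fin D → ℝ)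
    (hα : 0 < αt) (hσ : 0 < σt) (hDstar : 0 ≤ Dstar) (hI0 : 0 < I0)
    (z : Fin K → (Fin d → ℝ))
    (f0 : (Fin d → ℝ) → ℝ) (f1 : (Fin d → ℝ) → EuclideanSpace ℝ (Fin D))
    (I1 : EuclideanSpace ℝ (Fin D))
    (hf0pos : ∀ w, 0 ≤ f0 w)
    -- Koksma–Hlawka inequality for `f₀` and for each coordinate of `f₁`:
    (hKH0 : |(1 / (K : ℝ)) * ∑ j, f0 (z j) - I0| ≤ V0 * Dstar)
    (hKH1 : ∀ r : Fin D, |(1 / (K : ℝ)) * ∑ j, f1 (z j) r - I1 r| ≤ V1 r * Dstar)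
    (hhalf : V0 * Dstar ≤ I0 / 2)
    (yt : EuclideanSpace ℝ (Fin D))
    (m mtilde : EuclideanSpace ℝ (Fin D))
    (hm : m = I0⁻¹ • I1)
    (hmt : mtilde = ((1 / (K : ℝ)) * ∑ j, f0 (z j))⁻¹ •
      ((1 / (K : ℝ)) • ∑ j, f1 (z j)))
    (stilde sc : EuclideanSpace ℝ (Fin D))
    (hst : stilde = (σt ^ 2)⁻¹ • (αt • mtilde - yt))
    (hsc : sc = (σt ^ 2)⁻¹ • (αt • m - yt)) :
    ‖stilde - sc‖ ≤ (2 * αt / (σt ^ 2 * I0)) * ((∑ r, V1 r) + ‖m‖ * V0) * Dstar := by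
  set A : ℝ := (1 / (K : ℝ)) * ∑ j, f0 (z j) with hA
  set B : EuclideanSpace ℝ (Fin D) := (1 / (K : ℝ)) • ∑ j, f1 (z j) with hB
  -- A is bounded below by I0/2
  have hAlow : I0 / 2 ≤ A := by
    have h2 := (abs_le.mp hKH0).1
    linarith
  have hApos : 0 < A := lt_of_lt_of_le (by linarith) hAlow
  -- coordinates of B
  have hBr : ∀ r : Fin D, B r = (1 / (K : ℝ)) * ∑ j, f1 (z j) r := by
    intro r
    show ((1 / (K : ℝ)) • ∑ j, f1 (z j)) r = _
    have : (∑ j, f1 (z j)) r = ∑ j, f1 (z j) r := by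
      rw [WithLp.ofLp_sum]; exact Finset.sum_apply r Finset.univ (fun j => f1 (z j))
    show (1 / (K : ℝ)) * (∑ j, f1 (z j)) r = _
    rw [this]
  -- bound on ‖B - I1‖
  have hBI1 : ‖B - I1‖ ≤ (∑ r, V1 r) * Dstar := by
    calc ‖B - I1‖ ≤ ∑ r, |(B - I1) r| := euclidean_norm_le_sum_abs _
      _ ≤ ∑ r, V1 r * Dstar := by
          apply Finset.sum_le_sum
          intro r _
          have : (B - I1) r = (1 / (K : ℝ)) * ∑ j, f1 (z j) r - I1 r := by
            simp [hBr r]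
          rw [this]
          exact hKH1 r
      _ = (∑ r, V1 r) * Dstar := by rw [Finset.sum_mul]
  -- I1 = I0 • m
  have hI1m : I1 = I0 • m := by
    rw [hm, smul_smul, mul_inv_cancel₀ hI0.ne', one_smul]
  -- decomposition
  have hdecomp : mtilde - m = A⁻¹ • (B - I1) + (A⁻¹ * (I0 - A)) • m := by
    have h1 : (A⁻¹ * (I0 - A)) • m = (A⁻¹ * I0) • m - m := by
      rw [mul_sub, sub_smul, mul_comm A⁻¹ A, mul_inv_cancel₀ hApos.ne', one_smul]
    have h2 : A⁻¹ • I1 = (A⁻¹ * I0) • m := by rw [hI1m, smul_smul]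
    rw [hmt, h1, smul_sub, h2]
    abel
  have hnormm : ‖mtilde - m‖ ≤ A⁻¹ * ((∑ r, V1 r) * Dstar + V0 * Dstar * ‖m‖) := by
    calc ‖mtilde - m‖ ≤ ‖A⁻¹ • (B - I1)‖ + ‖(A⁻¹ * (I0 - A)) • m‖ := by
          rw [hdecomp]; exact norm_add_le _ _
      _ = A⁻¹ * ‖B - I1‖ + A⁻¹ * |I0 - A| * ‖m‖ := by
          rw [norm_smul, norm_smul, Real.norm_eq_abs, Real.norm_eq_abs,
            abs_of_pos (inv_pos.mpr hApos), abs_mul,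
            abs_of_pos (inv_pos.mpr hApos)]
      _ ≤ A⁻¹ * ((∑ r, V1 r) * Dstar) + A⁻¹ * (V0 * Dstar) * ‖m‖ := by
          have hIA : |I0 - A| ≤ V0 * Dstar := by
            rw [abs_sub_comm]; exact hKH0
          have hAinv : 0 ≤ A⁻¹ := (inv_pos.mpr hApos).le
          gcongr
      _ = A⁻¹ * ((∑ r, V1 r) * Dstar + V0 * Dstar * ‖m‖) := by ring
  have hAinvle : A⁻¹ ≤ 2 / I0 := by
    rw [div_eq_mul_inv]
    have : A⁻¹ ≤ (I0 / 2)⁻¹ := by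
      apply inv_anti₀ (by linarith) hAlow
    calc A⁻¹ ≤ (I0 / 2)⁻¹ := this
      _ = 2 * I0⁻¹ := by field_simp
  -- put it together
  have hst' : stilde - sc = ((σt ^ 2)⁻¹ * αt) • (mtilde - m) := by
    rw [hst, hsc, ← smul_sub, mul_smul]
    congr 1
    rw [sub_sub_sub_cancel_right, smul_sub]
  have hσ2 : (0:ℝ) < σt ^ 2 := by positivity
  calc ‖stilde - sc‖ = (σt ^ 2)⁻¹ * αt * ‖mtilde - m‖ := by
        rw [hst', norm_smul, Real.norm_eq_abs, abs_of_pos (by positivity)]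
    _ ≤ (σt ^ 2)⁻¹ * αt * (A⁻¹ * ((∑ r, V1 r) * Dstar + V0 * Dstar * ‖m‖)) := by
        gcongr
    _ ≤ (σt ^ 2)⁻¹ * αt * ((2 / I0) * ((∑ r, V1 r) * Dstar + V0 * Dstar * ‖m‖)) := by
        have hnn : 0 ≤ (∑ r, V1 r) * Dstar + V0 * Dstar * ‖m‖ := by
          have h1 : 0 ≤ (∑ r, V1 r) * Dstar := by
            rw [Finset.sum_mul]
            exact Finset.sum_nonneg fun r _ => le_trans (abs_nonneg _) (hKH1 r)
          have h2 : (0:ℝ) ≤ V0 * Dstar := le_trans (abs_nonneg _) hKH0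
          exact add_nonneg h1 (mul_nonneg h2 (norm_nonneg _))
        gcongr
    _ = (2 * αt / (σt ^ 2 * I0)) * ((∑ r, V1 r) + ‖m‖ * V0) * Dstar := by
        field_simp
end
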